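/- With g as defined via g(a,b) = min{f₁(a)f₂(b₁) + f₁^min f₂^∞(b₂) : b₁+b₂ = b}, the function b ↦ g(a,b) is convex for each fixed a, and its recession function satisfies g^∞(a, b) = f₁^min f₂^∞(b) for every a ∈ V and b ∈ ℝ^l. -/

import Mathlib

/-- With `g(a,b) = inf { f₁(a) f₂(b₁) + f₁^min f₂^∞(b - b₁) }` (an infimal
convolution), the function `b ↦ g(a,b)` is convex for each a, and its recession function
satisfies `g^∞(a,b) = lim_{t→∞} g(a, tb)/t = f₁^min f₂^∞(b)`. -/
theorem stmt14 {l : ℕ} {V : Type*} [NormedAddCommGroup V] [NormedSpace ℝ V]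
    [FiniteDimensional ℝ V]
    (f₁ : V → ℝ) (hf₁c : Continuous f₁)
    (C₁ C₂ : ℝ) (hC₁ : 0 < C₁) (hC₁₂ : C₁ ≤ C₂)
    (hf₁b : ∀ a, C₁ ≤ f₁ a ∧ f₁ a ≤ C₂)
    (f₂ : EuclideanSpace ℝ (Fin l) → ℝ)
    (hf₂conv : ConvexOn ℝ Set.univ f₂)
    (K : ℝ) (hK : 0 < K)
    (hf₂b : ∀ b, K⁻¹ * ‖b‖ ≤ f₂ b ∧ f₂ b ≤ K * (1 + ‖b‖))
    (f₂inf : EuclideanSpace ℝ (Fin l) → ℝ)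
    (hf₂inf : ∀ b, Filter.Tendsto (fun t : ℝ => f₂ (t • b) / t)
      Filter.atTop (nhds (f₂inf b))) :
    (∀ a : V, ConvexOn ℝ Set.univ (fun b : EuclideanSpace ℝ (Fin l) =>
      ⨅ c : EuclideanSpace ℝ (Fin l),
        (f₁ a * f₂ c + (⨅ a' : V, f₁ a') * f₂inf (b - c)))) ∧
    (∀ (a : V) (b : EuclideanSpace ℝ (Fin l)),
      Filter.Tendsto
        (fun t : ℝ =>
          (⨅ c : EuclideanSpace ℝ (Fin l),
            (f₁ a * f₂ c + (⨅ a' : V, f₁ a') * f₂inf (t • b - c))) / t)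
        Filter.atTop (nhds ((⨅ a' : V, f₁ a') * f₂inf b))) := by
  classical
  -- basic positivity facts
  have hf₂0 : ∀ c : EuclideanSpace ℝ (Fin l), 0 ≤ f₂ c := fun c =>
    le_trans (by positivity) (hf₂b c).1
  have hfi0 : ∀ b : EuclideanSpace ℝ (Fin l), 0 ≤ f₂inf b := by
    intro b
    refine ge_of_tendsto (hf₂inf b) ?_
    filter_upwards [Filter.eventually_gt_atTop (0 : ℝ)] with t ht
    exact div_nonneg (hf₂0 _) ht.le
  -- positive homogeneity of f₂inf
  have hfi_homog : ∀ s : ℝ, 0 < s → ∀ b : EuclideanSpace ℝ (Fin l),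
      f₂inf (s • b) = s * f₂inf b := by
    intro s hs b
    have h2 : Filter.Tendsto (fun t : ℝ => t * s) Filter.atTop Filter.atTop :=
      Filter.Tendsto.atTop_mul_const hs Filter.tendsto_id
    have h3 := (hf₂inf b).comp h2
    have h4 := h3.const_mul s
    have h5 : Filter.Tendsto (fun t : ℝ => f₂ (t • (s • b)) / t)
        Filter.atTop (nhds (s * f₂inf b)) := by
      refine h4.congr' ?_
      filter_upwards [Filter.eventually_gt_atTop (0 : ℝ)] with t ht
      simp only [Function.comp]
      rw [smul_smul]
      rw [mul_comm t s]
      field_simp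
    exact tendsto_nhds_unique (hf₂inf (s • b)) h5
  -- key recession inequality : f₂ (x + v) ≤ f₂ x + f₂inf v
  have hA : ∀ x v : EuclideanSpace ℝ (Fin l), f₂ (x + v) ≤ f₂ x + f₂inf v := by
    intro x v
    have hbound : ∀ t : ℝ, 1 ≤ t →
        f₂ (x + v) ≤ (1 - 1/t) * f₂ x + (1/(2*t)) * f₂ ((2:ℝ) • x)
          + f₂ ((2*t) • v) / (2*t) := by
      intro t ht
      have ht0 : 0 < t := lt_of_lt_of_le one_pos ht
      have h1 : x + v = (1 - 1/t) • x + (1/t) • (x + t • v) := by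
        rw [smul_add, smul_smul]
        rw [one_div, inv_mul_cancel₀ ht0.ne']
        rw [sub_smul, one_smul, one_smul]
        abel
      have h2 : x + t • v = (1/2 : ℝ) • ((2:ℝ) • x) + (1/2 : ℝ) • ((2*t) • v) := by
        rw [smul_smul, smul_smul]
        norm_num
        congr 1
        ring
      have hsub : (0:ℝ) ≤ 1 - 1/t := by
        rw [sub_nonneg]
        exact (div_le_one ht0).2 ht
      have c1 := hf₂conv.2 (Set.mem_univ x) (Set.mem_univ (x + t • v))
        hsub (by positivity : (0:ℝ) ≤ 1/t) (by ring)
      have c2 := hf₂conv.2 (Set.mem_univ ((2:ℝ) • x)) (Set.mem_univ ((2*t) • v))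
        (by norm_num : (0:ℝ) ≤ 1/2) (by norm_num : (0:ℝ) ≤ 1/2) (by norm_num)
      rw [← h1] at c1
      rw [← h2] at c2
      simp only [smul_eq_mul] at c1 c2
      have ht0' : (0:ℝ) < 1/t := by positivity
      calc f₂ (x + v) ≤ (1 - 1/t) * f₂ x + (1/t) * f₂ (x + t • v) := c1
        _ ≤ (1 - 1/t) * f₂ x + (1/t) * ((1/2) * f₂ ((2:ℝ) • x) + (1/2) * f₂ ((2*t) • v)) := by
            have := mul_le_mul_of_nonneg_left c2 ht0'.le
            linarith
        _ = (1 - 1/t) * f₂ x + (1/(2*t)) * f₂ ((2:ℝ) • x) + f₂ ((2*t) • v) / (2*t) := by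
            field_simp
            ring
    -- RHS tends to f₂ x + f₂inf v
    have l1 : Filter.Tendsto (fun t : ℝ => (1 - 1/t) * f₂ x)
        Filter.atTop (nhds (f₂ x)) := by
      have h : Filter.Tendsto (fun t : ℝ => 1 - 1/t) Filter.atTop (nhds 1) := by
        have h0 := tendsto_inv_atTop_zero (𝕜 := ℝ)
        have h1 := Filter.Tendsto.const_sub (1:ℝ) h0
        simpa [one_div] using h1
      simpa using h.mul_const (f₂ x)
    have h2t : Filter.Tendsto (fun t : ℝ => 2*t) Filter.atTop Filter.atTop :=
      Filter.Tendsto.const_mul_atTop two_pos Filter.tendsto_id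
    have l2 : Filter.Tendsto (fun t : ℝ => (1/(2*t)) * f₂ ((2:ℝ) • x))
        Filter.atTop (nhds 0) := by
      have h := (tendsto_inv_atTop_zero (𝕜 := ℝ)).comp h2t
      simpa [one_div, Function.comp] using h.mul_const (f₂ ((2:ℝ) • x))
    have l3 : Filter.Tendsto (fun t : ℝ => f₂ ((2*t) • v) / (2*t))
        Filter.atTop (nhds (f₂inf v)) := by
      have h := (hf₂inf v).comp h2t
      exact h
    have ltot := (l1.add l2).add l3
    rw [add_zero] at ltot
    refine ge_of_tendsto ltot ?_
    filter_upwards [Filter.eventually_ge_atTop (1 : ℝ)] with t ht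
    exact hbound t ht
  -- convexity-type inequality for f₂inf
  have hfi_conv : ∀ (u w : EuclideanSpace ℝ (Fin l)) (θ σ : ℝ),
      0 ≤ θ → 0 ≤ σ → θ + σ = 1 →
      f₂inf (θ • u + σ • w) ≤ θ * f₂inf u + σ * f₂inf w := by
    intro u w θ σ hθ hσ hθσ
    have hr : Filter.Tendsto (fun t : ℝ => θ * (f₂ (t • u) / t) + σ * (f₂ (t • w) / t))
        Filter.atTop (nhds (θ * f₂inf u + σ * f₂inf w)) :=
      ((hf₂inf u).const_mul θ).add ((hf₂inf w).const_mul σ)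
    refine le_of_tendsto_of_tendsto (hf₂inf (θ • u + σ • w)) hr ?_
    filter_upwards [Filter.eventually_gt_atTop (0 : ℝ)] with t ht
    have he : t • (θ • u + σ • w) = θ • (t • u) + σ • (t • w) := by
      rw [smul_add, smul_smul, smul_smul, smul_smul, smul_smul, mul_comm t θ, mul_comm t σ]
    have c := hf₂conv.2 (Set.mem_univ (t • u)) (Set.mem_univ (t • w)) hθ hσ hθσ
    simp only [smul_eq_mul] at c
    rw [← he] at c
    calc f₂ (t • (θ • u + σ • w)) / t
        ≤ (θ * f₂ (t • u) + σ * f₂ (t • w)) / t := (div_le_div_iff_of_pos_right ht).2 c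
      _ = θ * (f₂ (t • u) / t) + σ * (f₂ (t • w) / t) := by ring
  refine ⟨?_, ?_⟩
  · -- convexity
    intro a
    haveI : Nonempty V := ⟨a⟩
    set m := ⨅ a' : V, f₁ a' with hmdef
    have hm₁ : C₁ ≤ m := le_ciInf fun a' => (hf₁b a').1
    have hm0 : 0 < m := lt_of_lt_of_le hC₁ hm₁
    have hfa : 0 < f₁ a := lt_of_lt_of_le hC₁ (hf₁b a).1
    have hF0 : ∀ b c : EuclideanSpace ℝ (Fin l),
        0 ≤ f₁ a * f₂ c + m * f₂inf (b - c) := fun b c =>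
      add_nonneg (mul_nonneg hfa.le (hf₂0 c)) (mul_nonneg hm0.le (hfi0 _))
    have hFbdd : ∀ b : EuclideanSpace ℝ (Fin l),
        BddBelow (Set.range fun c : EuclideanSpace ℝ (Fin l) =>
          f₁ a * f₂ c + m * f₂inf (b - c)) := by
      intro b
      refine ⟨0, ?_⟩
      rintro x ⟨c, rfl⟩
      exact hF0 b c
    refine ⟨convex_univ, ?_⟩
    intro x _ y _ θ σ hθ hσ hθσ
    simp only [smul_eq_mul]
    refine le_of_forall_pos_le_add ?_
    intro ε hε
    set gx := ⨅ c : EuclideanSpace ℝ (Fin l), (f₁ a * f₂ c + m * f₂inf (x - c)) with hgx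
    set gy := ⨅ c : EuclideanSpace ℝ (Fin l), (f₁ a * f₂ c + m * f₂inf (y - c)) with hgy
    obtain ⟨c₁, hc₁⟩ : ∃ c₁ : EuclideanSpace ℝ (Fin l),
        f₁ a * f₂ c₁ + m * f₂inf (x - c₁) < gx + ε/2 :=
      exists_lt_of_ciInf_lt (lt_add_of_pos_right gx (half_pos hε))
    obtain ⟨c₂, hc₂⟩ : ∃ c₂ : EuclideanSpace ℝ (Fin l),
        f₁ a * f₂ c₂ + m * f₂inf (y - c₂) < gy + ε/2 :=
      exists_lt_of_ciInf_lt (lt_add_of_pos_right gy (half_pos hε))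
    have key : f₁ a * f₂ (θ • c₁ + σ • c₂)
          + m * f₂inf ((θ • x + σ • y) - (θ • c₁ + σ • c₂))
        ≤ θ * (f₁ a * f₂ c₁ + m * f₂inf (x - c₁))
          + σ * (f₁ a * f₂ c₂ + m * f₂inf (y - c₂)) := by
      have he : (θ • x + σ • y) - (θ • c₁ + σ • c₂) = θ • (x - c₁) + σ • (y - c₂) := by
        rw [smul_sub, smul_sub]; abel
      have c3 := hf₂conv.2 (Set.mem_univ c₁) (Set.mem_univ c₂) hθ hσ hθσ
      simp only [smul_eq_mul] at c3
      have c4 := hfi_conv (x - c₁) (y - c₂) θ σ hθ hσ hθσ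
      rw [he]
      have t1 : f₁ a * f₂ (θ • c₁ + σ • c₂) ≤ f₁ a * (θ * f₂ c₁ + σ * f₂ c₂) :=
        mul_le_mul_of_nonneg_left c3 hfa.le
      have t2 : m * f₂inf (θ • (x - c₁) + σ • (y - c₂))
          ≤ m * (θ * f₂inf (x - c₁) + σ * f₂inf (y - c₂)) :=
        mul_le_mul_of_nonneg_left c4 hm0.le
      nlinarith [t1, t2]
    calc (⨅ c : EuclideanSpace ℝ (Fin l),
          (f₁ a * f₂ c + m * f₂inf ((θ • x + σ • y) - c)))
        ≤ f₁ a * f₂ (θ • c₁ + σ • c₂)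
          + m * f₂inf ((θ • x + σ • y) - (θ • c₁ + σ • c₂)) :=
          ciInf_le (hFbdd _) _
      _ ≤ θ * (f₁ a * f₂ c₁ + m * f₂inf (x - c₁))
          + σ * (f₁ a * f₂ c₂ + m * f₂inf (y - c₂)) := key
      _ ≤ θ * (gx + ε/2) + σ * (gy + ε/2) :=
          add_le_add (mul_le_mul_of_nonneg_left hc₁.le hθ)
            (mul_le_mul_of_nonneg_left hc₂.le hσ)
      _ = θ * gx + σ * gy + (θ + σ) * (ε/2) := by ring
      _ ≤ θ * gx + σ * gy + ε := by rw [hθσ]; linarith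
  · -- recession function
    intro a b
    haveI : Nonempty V := ⟨a⟩
    set m := ⨅ a' : V, f₁ a' with hmdef
    have hbddf₁ : BddBelow (Set.range f₁) := by
      refine ⟨C₁, ?_⟩
      rintro x ⟨a', rfl⟩
      exact (hf₁b a').1
    have hm₁ : C₁ ≤ m := le_ciInf fun a' => (hf₁b a').1
    have hm0 : 0 < m := lt_of_lt_of_le hC₁ hm₁
    have hma : m ≤ f₁ a := ciInf_le hbddf₁ a
    have hfa : 0 < f₁ a := lt_of_lt_of_le hC₁ (hf₁b a).1
    have hFbdd : ∀ u : EuclideanSpace ℝ (Fin l),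
        BddBelow (Set.range fun c : EuclideanSpace ℝ (Fin l) =>
          f₁ a * f₂ c + m * f₂inf (u - c)) := by
      intro u
      refine ⟨0, ?_⟩
      rintro x ⟨c, rfl⟩
      exact add_nonneg (mul_nonneg hfa.le (hf₂0 c)) (mul_nonneg hm0.le (hfi0 _))
    -- squeeze
    have llow : Filter.Tendsto (fun t : ℝ => m * (f₂ (t • b) / t))
        Filter.atTop (nhds (m * f₂inf b)) := (hf₂inf b).const_mul m
    have lupp : Filter.Tendsto (fun t : ℝ => (f₁ a * f₂ 0) / t + m * f₂inf b)
        Filter.atTop (nhds (m * f₂inf b)) := by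
      have h1 : Filter.Tendsto (fun t : ℝ => (f₁ a * f₂ 0) / t)
          Filter.atTop (nhds 0) := by
        have h := (tendsto_inv_atTop_zero (𝕜 := ℝ)).const_mul (f₁ a * f₂ 0)
        simpa [div_eq_mul_inv] using h
      simpa using h1.add_const (m * f₂inf b)
    refine tendsto_of_tendsto_of_tendsto_of_le_of_le' llow lupp ?_ ?_
    · filter_upwards [Filter.eventually_gt_atTop (0 : ℝ)] with t ht
      have hge : m * f₂ (t • b) ≤ ⨅ c : EuclideanSpace ℝ (Fin l),
          (f₁ a * f₂ c + m * f₂inf (t • b - c)) := by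
        refine le_ciInf fun c => ?_
        have h1 : f₂ (t • b) ≤ f₂ c + f₂inf (t • b - c) := by
          have h := hA c (t • b - c)
          rwa [add_sub_cancel] at h
        have h2 : m * f₂ (t • b) ≤ m * (f₂ c + f₂inf (t • b - c)) :=
          mul_le_mul_of_nonneg_left h1 hm0.le
        have h3 : m * f₂ c ≤ f₁ a * f₂ c := mul_le_mul_of_nonneg_right hma (hf₂0 c)
        nlinarith
      calc m * (f₂ (t • b) / t) = (m * f₂ (t • b)) / t := by ring
        _ ≤ (⨅ c : EuclideanSpace ℝ (Fin l),
              (f₁ a * f₂ c + m * f₂inf (t • b - c))) / t :=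
            (div_le_div_iff_of_pos_right ht).2 hge
    · filter_upwards [Filter.eventually_gt_atTop (0 : ℝ)] with t ht
      have hle : (⨅ c : EuclideanSpace ℝ (Fin l),
            (f₁ a * f₂ c + m * f₂inf (t • b - c)))
          ≤ f₁ a * f₂ 0 + m * (t * f₂inf b) := by
        have h0 := ciInf_le (hFbdd (t • b)) (0 : EuclideanSpace ℝ (Fin l))
        rw [sub_zero] at h0
        rwa [hfi_homog t ht b] at h0
      calc (⨅ c : EuclideanSpace ℝ (Fin l),
            (f₁ a * f₂ c + m * f₂inf (t • b - c))) / t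
          ≤ (f₁ a * f₂ 0 + m * (t * f₂inf b)) / t := (div_le_div_iff_of_pos_right ht).2 hle
        _ = (f₁ a * f₂ 0) / t + m * f₂inf b := by
            rw [add_div, mul_div_assoc]
            congr 1
            rw [mul_div_assoc, mul_div_cancel_left₀ _ ht.ne']
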